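/- Let Δ := Σ_{m=0}^{d} (h_m ⊗ l_m + l_m ⊗ h_m) ∈ A ⊗ A. For α = Σ u_i ⊗ v_i ∈ A ⊗ A and x ∈ A define the correspondence action α_*(x) := Σ_i deg(x·u_i)·v_i ∈ A. Then Δ_*(x) = x for every x ∈ A, i.e. the diagonal class Δ acts as the identity correspondence on A. -/

import Mathlib

/-- The diagonal class `Δ = Σ_{m=0}^{d} (h_m ⊗ l_m + l_m ⊗ h_m)` acts as the identity
correspondence on the mod-2 Chow group `A` of a split quadric of odd dimension `2d+1`:
for every `x ∈ A`, `Δ_*(x) = Σ_m (deg(x·h_m)·l_m + deg(x·l_m)·h_m) = x`. -/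
theorem diagonal_acts_as_identity (d : ℕ) (hd : 1 ≤ d)
    (A : Type) [CommRing A] [Algebra (ZMod 2) A]
    (h l : ℕ → A)
    (hh0 : h 0 = 1)
    (hmulhh : ∀ a b : ℕ, a ≤ d → b ≤ d → h a * h b = if a + b ≤ d then h (a + b) else 0)
    (hmulhl : ∀ a j : ℕ, a ≤ d → j ≤ d → h a * l j = if a ≤ j then l (j - a) else 0)
    (hmulll : ∀ i j : ℕ, l i * l j = 0)
    (bA : Module.Basis (Fin (d+1) ⊕ Fin (d+1)) (ZMod 2) A)
    (hbh : ∀ a : Fin (d+1), bA (Sum.inl a) = h a.val)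
    (hbl : ∀ a : Fin (d+1), bA (Sum.inr a) = l a.val)
    (deg : A →ₗ[ZMod 2] ZMod 2)
    (hdegl0 : deg (l 0) = 1)
    (hdegh : ∀ a : ℕ, a ≤ d → deg (h a) = 0)
    (hdegl : ∀ j : ℕ, 1 ≤ j → j ≤ d → deg (l j) = 0)
    (x : A) :
    ∑ m ∈ Finset.range (d+1), (deg (x * h m) • l m + deg (x * l m) • h m) = x := by
  classical
  let F : A →ₗ[ZMod 2] A :=
    ∑ m ∈ Finset.range (d+1),
      ((deg.comp (LinearMap.mulRight (ZMod 2) (h m))).smulRight (l m)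
        + (deg.comp (LinearMap.mulRight (ZMod 2) (l m))).smulRight (h m))
  have hF : ∀ y : A,
      F y = ∑ m ∈ Finset.range (d+1), (deg (y * h m) • l m + deg (y * l m) • h m) := by
    intro y
    simp [F, LinearMap.sum_apply]
  have hFid : F = LinearMap.id := by
    apply bA.ext
    intro i
    rcases i with a | a
    · have ha : a.val ≤ d := Nat.lt_succ_iff.mp a.isLt
      rw [hbh, LinearMap.id_apply, hF]
      rw [Finset.sum_eq_single a.val]
      · rw [hmulhh a.val a.val ha ha, hmulhl a.val a.val ha ha]
        have h1 : deg (if a.val + a.val ≤ d then h (a.val + a.val) else 0) = 0 := by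
          split
          · exact hdegh _ ‹_›
          · simp
        simp [h1, hdegl0]
      · intro m hm hne
        have hmd : m ≤ d := Nat.lt_succ_iff.mp (Finset.mem_range.mp hm)
        rw [hmulhh a.val m ha hmd, hmulhl a.val m ha hmd]
        have h1 : deg (if a.val + m ≤ d then h (a.val + m) else 0) = 0 := by
          split
          · exact hdegh _ ‹_›
          · simp
        have h2 : deg (if a.val ≤ m then l (m - a.val) else 0) = 0 := by
          split
          · have hlt : a.val < m := lt_of_le_of_ne ‹_› (fun e => hne e.symm)
            exact hdegl _ (Nat.le_sub_of_add_le (by omega)) (le_trans (Nat.sub_le _ _) hmd)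
          · simp
        simp [h1, h2]
      · intro hnot
        exact absurd (Finset.mem_range.mpr a.isLt) hnot
    · have ha : a.val ≤ d := Nat.lt_succ_iff.mp a.isLt
      rw [hbl, LinearMap.id_apply, hF]
      rw [Finset.sum_eq_single a.val]
      · rw [mul_comm, hmulhl a.val a.val ha ha, hmulll]
        simp [hdegl0]
      · intro m hm hne
        have hmd : m ≤ d := Nat.lt_succ_iff.mp (Finset.mem_range.mp hm)
        rw [mul_comm (l a.val) (h m), hmulhl m a.val hmd ha, hmulll]
        have h2 : deg (if m ≤ a.val then l (a.val - m) else 0) = 0 := by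
          split
          · have hlt : m < a.val := lt_of_le_of_ne ‹_› hne
            exact hdegl _ (Nat.le_sub_of_add_le (by omega)) (le_trans (Nat.sub_le _ _) ha)
          · simp
        simp [h2]
      · intro hnot
        exact absurd (Finset.mem_range.mpr a.isLt) hnot
  calc ∑ m ∈ Finset.range (d+1), (deg (x * h m) • l m + deg (x * l m) • h m)
      = F x := (hF x).symm
    _ = x := by rw [hFid, LinearMap.id_apply]
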